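/- Let r₀, r₁ ∈ [0,1) and θ ∈ ℝ, and define the 2×2 density matrices ρ = (1/2)(I + r₀(cos θ · σ_z + sin θ · σ_x)) and σ = (1/2)(I + r₁ · σ_z), where σ_x, σ_z are the Pauli matrices. Then the quantum relative entropy satisfies D(ρ‖σ) = (1/2)(1+r₀)·log((1+r₀)/(1+r₁)) + (1/2)(1−r₀)·log((1−r₀)/(1−r₁)) + r₀·sin²(θ/2)·log((1+r₁)/(1−r₁)). In particular D(ρ‖σ) = D(λ₀‖λ₁) + r₀·sin²(θ/2)·log((1+r₁)/(1−r₁)), where D(λ₀‖λ₁) is the binary relative entropy between the spectra {(1±r₀)/2} and {(1±r₁)/2}. -/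

import Mathlib

/-- Functional-calculus (spectral) logarithm of a Hermitian matrix:
the eigenvalues are replaced by their (natural) logarithms in a spectral
decomposition; junk value `0` on non-Hermitian input. -/
noncomputable def matLog {m : Type*} [Fintype m] [DecidableEq m]
    (A : Matrix m m ℂ) : Matrix m m ℂ :=
  if hA : A.IsHermitian then
    (hA.eigenvectorUnitary : Matrix m m ℂ) *
      Matrix.diagonal (fun i => (Real.log (hA.eigenvalues i) : ℂ)) *
      star (hA.eigenvectorUnitary : Matrix m m ℂ)
  else 0

/-- Quantum relative entropy `D(A‖B) = Re tr(A (log A − log B))`. -/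
noncomputable def qRelEnt {m : Type*} [Fintype m] [DecidableEq m]
    (A B : Matrix m m ℂ) : ℝ :=
  ((A * (matLog A - matLog B)).trace).re

/-- The Pauli matrix `σ_x`. -/
def pauliX : Matrix (Fin 2) (Fin 2) ℂ := !![0, 1; 1, 0]

/-- The Pauli matrix `σ_z`. -/
def pauliZ : Matrix (Fin 2) (Fin 2) ℂ := !![1, 0; 0, -1]

lemma matLog_affine {m : Type*} [Fintype m] [DecidableEq m]
    (A : Matrix m m ℂ) (hA : A.IsHermitian) (α β : ℝ)
    (h : ∀ i, Real.log (hA.eigenvalues i) = α * hA.eigenvalues i + β) :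
    matLog A = (α : ℂ) • A + (β : ℂ) • 1 := by
  have hU : (hA.eigenvectorUnitary : Matrix m m ℂ) *
      star (hA.eigenvectorUnitary : Matrix m m ℂ) = 1 :=
    (Matrix.mem_unitaryGroup_iff).mp hA.eigenvectorUnitary.2
  rw [matLog, dif_pos hA]
  have hdiag : Matrix.diagonal (fun i => (Real.log (hA.eigenvalues i) : ℂ))
      = (α : ℂ) • Matrix.diagonal ((RCLike.ofReal : ℝ → ℂ) ∘ hA.eigenvalues)
        + (β : ℂ) • (1 : Matrix m m ℂ) := by
    ext i j
    rcases eq_or_ne i j with rfl | hij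
    · simp only [Matrix.diagonal_apply_eq, Matrix.add_apply, Matrix.smul_apply,
        Matrix.one_apply_eq, Function.comp_apply, smul_eq_mul, mul_one, RCLike.ofReal_alg]
      rw [h i]; push_cast [Complex.real_smul]; ring
    · simp [Matrix.diagonal_apply_ne _ hij, Matrix.one_apply_ne hij]
  rw [hdiag, Matrix.mul_add, Matrix.add_mul, Matrix.mul_smul, Matrix.smul_mul,
    Matrix.mul_smul, Matrix.smul_mul, Matrix.mul_one, hU]
  congr 1
  exact congrArg _ hA.spectral_theorem.symm

lemma eigenvalues_quadratic {m : Type*} [Fintype m] [DecidableEq m]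
    {A : Matrix m m ℂ} (hA : A.IsHermitian) (a b : ℝ)
    (h : (A - ((a : ℂ)) • 1) * (A - ((b : ℂ)) • 1) = 0) (i : m) :
    hA.eigenvalues i = a ∨ hA.eigenvalues i = b := by
  set U : Matrix m m ℂ := (hA.eigenvectorUnitary : Matrix m m ℂ) with hUdef
  have hU1 : star U * U = 1 := (Matrix.mem_unitaryGroup_iff').mp hA.eigenvectorUnitary.2
  have hU2 : U * star U = 1 := (Matrix.mem_unitaryGroup_iff).mp hA.eigenvectorUnitary.2
  have hD : star U * A * U = Matrix.diagonal ((RCLike.ofReal : ℝ → ℂ) ∘ hA.eigenvalues) := by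
    rw [← hA.conjStarAlgAut_star_eigenvectorUnitary, Unitary.conjStarAlgAut_apply]
    simp [hUdef]
  set D : Matrix m m ℂ := Matrix.diagonal ((RCLike.ofReal : ℝ → ℂ) ∘ hA.eigenvalues) with hDdef
  have key : (D - (a : ℂ) • 1) * (D - (b : ℂ) • 1) = 0 := by
    have e1 : star U * (A - (a : ℂ) • 1) * U = D - (a : ℂ) • 1 := by
      rw [Matrix.mul_sub, Matrix.sub_mul, hD, Matrix.mul_smul, Matrix.smul_mul,
        Matrix.mul_one, hU1]
    have e2 : star U * (A - (b : ℂ) • 1) * U = D - (b : ℂ) • 1 := by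
      rw [Matrix.mul_sub, Matrix.sub_mul, hD, Matrix.mul_smul, Matrix.smul_mul,
        Matrix.mul_one, hU1]
    calc (D - (a : ℂ) • 1) * (D - (b : ℂ) • 1)
        = (star U * (A - (a : ℂ) • 1) * U) * (star U * (A - (b : ℂ) • 1) * U) := by
          rw [e1, e2]
      _ = star U * (A - (a : ℂ) • 1) * (U * star U) * (A - (b : ℂ) • 1) * U := by
          simp only [Matrix.mul_assoc]
      _ = star U * ((A - (a : ℂ) • 1) * (A - (b : ℂ) • 1)) * U := by
          rw [hU2, Matrix.mul_one]; simp only [Matrix.mul_assoc]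
      _ = 0 := by rw [h, Matrix.mul_zero, Matrix.zero_mul]
  have ea : D - (a : ℂ) • 1 = Matrix.diagonal (fun j => (hA.eigenvalues j : ℂ) - a) := by
    ext i' j'
    rcases eq_or_ne i' j' with rfl | hij
    · simp [hDdef, Matrix.diagonal_apply_eq]
    · simp [hDdef, Matrix.diagonal_apply_ne _ hij, Matrix.one_apply_ne hij]
  have eb : D - (b : ℂ) • 1 = Matrix.diagonal (fun j => (hA.eigenvalues j : ℂ) - b) := by
    ext i' j'
    rcases eq_or_ne i' j' with rfl | hij
    · simp [hDdef, Matrix.diagonal_apply_eq]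
    · simp [hDdef, Matrix.diagonal_apply_ne _ hij, Matrix.one_apply_ne hij]
  rw [ea, eb, Matrix.diagonal_mul_diagonal] at key
  have key2 : Matrix.diagonal (fun j => ((hA.eigenvalues j : ℂ) - a) *
      ((hA.eigenvalues j : ℂ) - b)) = (0 : Matrix m m ℂ) := key
  have entry := congrFun (congrFun key2 i) i
  rw [Matrix.diagonal_apply_eq] at entry
  rcases mul_eq_zero.mp entry with h' | h'
  · left; exact_mod_cast sub_eq_zero.mp h'
  · right; exact_mod_cast sub_eq_zero.mp h'

lemma exists_affine_log (r : ℝ) (hr0 : 0 ≤ r) (hr1 : r < 1) :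
    ∃ α β : ℝ, Real.log ((1 + r) / 2) = α * ((1 + r) / 2) + β ∧
      Real.log ((1 - r) / 2) = α * ((1 - r) / 2) + β ∧
      α * r = Real.log (1 + r) - Real.log (1 - r) := by
  have h1 : (0 : ℝ) < 1 + r := by linarith
  have h2 : (0 : ℝ) < 1 - r := by linarith
  rcases eq_or_lt_of_le hr0 with h | h
  · refine ⟨0, Real.log ((1 + r) / 2), by ring, ?_, ?_⟩
    · rw [← h]; ring_nf
    · rw [← h]; ring
  · refine ⟨(Real.log (1 + r) - Real.log (1 - r)) / r,
      Real.log ((1 + r) / 2) - (Real.log (1 + r) - Real.log (1 - r)) / r * ((1 + r) / 2),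
      by ring, ?_, by field_simp⟩
    rw [Real.log_div h2.ne' two_ne_zero, Real.log_div h1.ne' two_ne_zero]
    field_simp
    ring

/-- **Relative entropy of two qubit states.**
For `ρ = ½(I + r₀(cos θ σ_z + sin θ σ_x))` and `σ = ½(I + r₁ σ_z)` with
`r₀, r₁ ∈ [0,1)`,
`D(ρ‖σ) = ½(1+r₀)log((1+r₀)/(1+r₁)) + ½(1−r₀)log((1−r₀)/(1−r₁))
          + r₀ sin²(θ/2) log((1+r₁)/(1−r₁))`. -/
theorem qubit_relEnt_formula
    (r₀ r₁ : ℝ) (hr₀ : r₀ ∈ Set.Ico (0 : ℝ) 1) (hr₁ : r₁ ∈ Set.Ico (0 : ℝ) 1)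
    (θ : ℝ)
    (ρ σ : Matrix (Fin 2) (Fin 2) ℂ)
    (hρ : ρ = (2⁻¹ : ℝ) •
      (1 + r₀ • (Real.cos θ • pauliZ + Real.sin θ • pauliX)))
    (hσ : σ = (2⁻¹ : ℝ) • (1 + r₁ • pauliZ)) :
    qRelEnt ρ σ
      = (1 / 2) * (1 + r₀) * Real.log ((1 + r₀) / (1 + r₁))
        + (1 / 2) * (1 - r₀) * Real.log ((1 - r₀) / (1 - r₁))
        + r₀ * Real.sin (θ / 2) ^ 2 * Real.log ((1 + r₁) / (1 - r₁)) := by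
  obtain ⟨h00, h01⟩ := hr₀
  obtain ⟨h10, h11⟩ := hr₁
  have hρ' : ρ = !![(((1 + r₀ * Real.cos θ) / 2 : ℝ) : ℂ), ((r₀ * Real.sin θ / 2 : ℝ) : ℂ);
      ((r₀ * Real.sin θ / 2 : ℝ) : ℂ), (((1 - r₀ * Real.cos θ) / 2 : ℝ) : ℂ)] := by
    subst hρ
    ext i j
    fin_cases i <;> fin_cases j <;>
      simp [pauliX, pauliZ, Matrix.one_apply, Matrix.add_apply, Matrix.smul_apply,
        Complex.real_smul] <;> push_cast <;> ring
  have hσ' : σ = !![(((1 + r₁) / 2 : ℝ) : ℂ), 0; 0, (((1 - r₁) / 2 : ℝ) : ℂ)] := by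
    subst hσ
    ext i j
    fin_cases i <;> fin_cases j <;>
      simp [pauliZ, Matrix.one_apply, Matrix.add_apply, Matrix.smul_apply,
        Complex.real_smul] <;> push_cast <;> ring
  have hermρ : ρ.IsHermitian := by
    rw [hρ']
    show Matrix.conjTranspose _ = _
    ext i j
    fin_cases i <;> fin_cases j <;>
      simp [Matrix.conjTranspose_apply, Complex.conj_ofReal, ← Complex.cos_conj,
        ← Complex.sin_conj]
  have hermσ : σ.IsHermitian := by
    rw [hσ']
    show Matrix.conjTranspose _ = _
    ext i j
    fin_cases i <;> fin_cases j <;>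
      simp [Matrix.conjTranspose_apply, Complex.conj_ofReal, ← Complex.cos_conj,
        ← Complex.sin_conj]
  have pythC : Complex.sin θ ^ 2 + Complex.cos θ ^ 2 = 1 := Complex.sin_sq_add_cos_sq θ
  have quadρ : (ρ - (((1 + r₀) / 2 : ℝ) : ℂ) • 1) * (ρ - (((1 - r₀) / 2 : ℝ) : ℂ) • 1) = 0 := by
    rw [hρ']
    ext i j
    fin_cases i <;> fin_cases j <;>
      · simp only [Matrix.mul_apply, Fin.sum_univ_two, Matrix.sub_apply, Matrix.smul_apply,
          Matrix.one_apply, Matrix.zero_apply, Matrix.cons_val', Matrix.cons_val_zero,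
          Matrix.cons_val_one, Matrix.head_cons, Matrix.head_fin_const, Matrix.empty_val',
          Matrix.cons_val_fin_one, smul_eq_mul]
        norm_num
        push_cast
        first
          | ring1
          | linear_combination (r₀ ^ 2 / 4 : ℂ) * pythC
          | linear_combination (-(r₀ ^ 2 / 4) : ℂ) * pythC
  have quadσ : (σ - (((1 + r₁) / 2 : ℝ) : ℂ) • 1) * (σ - (((1 - r₁) / 2 : ℝ) : ℂ) • 1) = 0 := by
    rw [hσ']
    ext i j
    fin_cases i <;> fin_cases j <;>
      · simp only [Matrix.mul_apply, Fin.sum_univ_two, Matrix.sub_apply, Matrix.smul_apply,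
          Matrix.one_apply, Matrix.zero_apply, Matrix.cons_val', Matrix.cons_val_zero,
          Matrix.cons_val_one, Matrix.head_cons, Matrix.head_fin_const, Matrix.empty_val',
          Matrix.cons_val_fin_one, smul_eq_mul]
        norm_num
  obtain ⟨α₀, β₀, ha0, hb0, hc0⟩ := exists_affine_log r₀ h00 h01
  obtain ⟨α₁, β₁, ha1, hb1, hc1⟩ := exists_affine_log r₁ h10 h11
  have hL0 : matLog ρ = (α₀ : ℂ) • ρ + (β₀ : ℂ) • 1 := by
    apply matLog_affine ρ hermρ
    intro i
    rcases eigenvalues_quadratic hermρ ((1 + r₀) / 2) ((1 - r₀) / 2) quadρ i with h | h <;>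
      rw [h]
    · exact ha0
    · exact hb0
  have hL1 : matLog σ = (α₁ : ℂ) • σ + (β₁ : ℂ) • 1 := by
    apply matLog_affine σ hermσ
    intro i
    rcases eigenvalues_quadratic hermσ ((1 + r₁) / 2) ((1 - r₁) / 2) quadσ i with h | h <;>
      rw [h]
    · exact ha1
    · exact hb1
  have htr : (ρ * (matLog ρ - matLog σ)).trace
      = ((α₀ * (1 + r₀ ^ 2) / 2 + β₀ - α₁ * (1 + r₀ * r₁ * Real.cos θ) / 2 - β₁ : ℝ) : ℂ) := by
    rw [hL0, hL1, hρ', hσ']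
    simp only [Matrix.trace_fin_two, Matrix.mul_apply, Fin.sum_univ_two, Matrix.sub_apply,
      Matrix.add_apply, Matrix.smul_apply, Matrix.one_apply, Matrix.cons_val', Matrix.cons_val_zero,
      Matrix.cons_val_one, Matrix.head_cons, Matrix.head_fin_const, Matrix.empty_val',
      Matrix.cons_val_fin_one, smul_eq_mul]
    norm_num
    push_cast
    first
      | ring1
      | linear_combination ((α₀ : ℂ) * (r₀ : ℂ) ^ 2 / 2) * pythC
      | linear_combination (-((α₀ : ℂ) * (r₀ : ℂ) ^ 2 / 2)) * pythC
  have hre : qRelEnt ρ σ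
      = α₀ * (1 + r₀ ^ 2) / 2 + β₀ - α₁ * (1 + r₀ * r₁ * Real.cos θ) / 2 - β₁ := by
    rw [qRelEnt, htr, Complex.ofReal_re]
  rw [hre]
  have h1p : (0 : ℝ) < 1 + r₀ := by linarith
  have h2p : (0 : ℝ) < 1 - r₀ := by linarith
  have h3p : (0 : ℝ) < 1 + r₁ := by linarith
  have h4p : (0 : ℝ) < 1 - r₁ := by linarith
  have hcos : Real.cos θ = 1 - 2 * Real.sin (θ / 2) ^ 2 := by
    have h2 := Real.cos_two_mul (θ / 2)
    rw [show 2 * (θ / 2) = θ by ring] at h2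
    have hp := Real.sin_sq_add_cos_sq (θ / 2)
    linarith
  rw [Real.log_div h1p.ne' two_ne_zero] at ha0
  rw [Real.log_div h3p.ne' two_ne_zero] at ha1
  rw [Real.log_div h1p.ne' h3p.ne', Real.log_div h2p.ne' h4p.ne',
    Real.log_div h3p.ne' h4p.ne', hcos]
  linear_combination (-1 : ℝ) * ha0 + ha1 + ((r₀ - 1) / 2) * hc0
    + ((1 - r₀ * (1 - 2 * Real.sin (θ / 2) ^ 2)) / 2) * hc1
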